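/- Let k, ℓ > 0 and P : ℝ³ → ℝ³ˣ³ be given by P(x) = [[1 + 2ℓk² + 4ℓ²x₁², −2ℓk, 2ℓx₁], [−2ℓk, 2ℓ, 0], [2ℓx₁, 0, 1]], and let φ(x₁,x₂,x₃) = (x₁, x₂ − kx₁, x₃ + ℓx₁²) with Jacobian Dφ(x). Then for every x ∈ ℝ³, (Dφ(x)⁻¹)ᵀ P(x) Dφ(x)⁻¹ = diag(1, 2ℓ, 1), i.e., the expression of the metric P in the coordinates defined by φ is the constant diagonal matrix diag(1, 2ℓ, 1). -/

import Mathlib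

open Matrix

/-- Jacobian matrix of a map `g : ℝⁿ → ℝᵐ` at `x`. -/
noncomputable def jac {n m : ℕ} (g : (Fin n → ℝ) → (Fin m → ℝ)) (x : Fin n → ℝ) :
    Matrix (Fin m) (Fin n) ℝ :=
  Matrix.of fun i j => fderiv ℝ (fun y => g y i) x (Pi.single j 1)

theorem stmt3 (k ℓ : ℝ) (hk : 0 < k) (hl : 0 < ℓ)
    (P : (Fin 3 → ℝ) → Matrix (Fin 3) (Fin 3) ℝ)
    (hP : ∀ x, P x =
      !![1 + 2*ℓ*k^2 + 4*ℓ^2*(x 0)^2, -(2*ℓ*k), 2*ℓ*(x 0);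
         -(2*ℓ*k), 2*ℓ, 0;
         2*ℓ*(x 0), 0, 1])
    (φ : (Fin 3 → ℝ) → (Fin 3 → ℝ))
    (hφ : ∀ x, φ x = ![x 0, x 1 - k * x 0, x 2 + ℓ * (x 0)^2]) :
    ∀ x : Fin 3 → ℝ,
      ((jac φ x)⁻¹)ᵀ * P x * (jac φ x)⁻¹ = Matrix.diagonal ![1, 2*ℓ, 1] := by
  intro x
  -- Compute the Jacobian explicitly
  have h0 : (fun y : Fin 3 → ℝ => φ y 0) = fun y => y 0 := by
    funext y; rw [hφ]; simp
  have h1 : (fun y : Fin 3 → ℝ => φ y 1) = fun y => y 1 - k * y 0 := by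
    funext y; rw [hφ]; simp
  have h2 : (fun y : Fin 3 → ℝ => φ y 2) = fun y => y 2 + ℓ * (y 0)^2 := by
    funext y; rw [hφ]; simp
  have hd0 : ∀ j : Fin 3, fderiv ℝ (fun y : Fin 3 → ℝ => φ y 0) x (Pi.single j 1)
      = (Pi.single j 1 : Fin 3 → ℝ) 0 := by
    intro j
    rw [h0, (hasFDerivAt_apply (𝕜 := ℝ) (0 : Fin 3) x).fderiv]; rfl
  have hd1 : ∀ j : Fin 3, fderiv ℝ (fun y : Fin 3 → ℝ => φ y 1) x (Pi.single j 1)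
      = (Pi.single j 1 : Fin 3 → ℝ) 1 - k * (Pi.single j 1 : Fin 3 → ℝ) 0 := by
    intro j
    have h : HasFDerivAt (fun y : Fin 3 → ℝ => y 1 - k * y 0)
        (ContinuousLinearMap.proj (1 : Fin 3) -
          k • ContinuousLinearMap.proj (R := ℝ) (φ := fun _ : Fin 3 => ℝ) (0 : Fin 3)) x :=
      (hasFDerivAt_apply (𝕜 := ℝ) (1 : Fin 3) x).sub
        ((hasFDerivAt_apply (𝕜 := ℝ) (0 : Fin 3) x).const_mul k)
    rw [h1, h.fderiv]; rfl
  have hd2 : ∀ j : Fin 3, fderiv ℝ (fun y : Fin 3 → ℝ => φ y 2) x (Pi.single j 1)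
      = (Pi.single j 1 : Fin 3 → ℝ) 2 + 2 * ℓ * x 0 * (Pi.single j 1 : Fin 3 → ℝ) 0 := by
    intro j
    have h : HasFDerivAt (fun y : Fin 3 → ℝ => y 2 + ℓ * (y 0)^2)
        (ContinuousLinearMap.proj (2 : Fin 3) +
          (2 * ℓ * x 0) • ContinuousLinearMap.proj (R := ℝ) (φ := fun _ : Fin 3 => ℝ) (0 : Fin 3)) x := by
      have hm := (hasFDerivAt_apply (𝕜 := ℝ) (2 : Fin 3) x).add
        (((hasFDerivAt_apply (𝕜 := ℝ) (0 : Fin 3) x).mul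
          (hasFDerivAt_apply (𝕜 := ℝ) (0 : Fin 3) x)).const_mul ℓ)
      have heq : (fun y : Fin 3 → ℝ => y 2 + ℓ * (y 0)^2) = fun y => y 2 + ℓ * (y 0 * y 0) := by
        funext y; ring
      rw [heq]
      refine hm.congr_fderiv ?_
      ext v
      simp
      ring
    rw [h2, h.fderiv]
    simp
  have hjac : jac φ x = !![1, 0, 0; -k, 1, 0; 2*ℓ*(x 0), 0, 1] := by
    ext i j
    fin_cases i <;> fin_cases j <;>
      simp [jac, hd0, hd1, hd2, Pi.single_apply]
  -- Compute the inverse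
  have hinv : (jac φ x)⁻¹ = !![1, 0, 0; k, 1, 0; -(2*ℓ*(x 0)), 0, 1] := by
    apply inv_eq_right_inv
    rw [hjac]
    ext i j
    fin_cases i <;> fin_cases j <;>
      simp [Matrix.mul_apply, Fin.sum_univ_three] <;> ring
  have htr : (!![1, 0, 0; k, 1, 0; -(2*ℓ*(x 0)), 0, 1] : Matrix (Fin 3) (Fin 3) ℝ)ᵀ
      = !![1, k, -(2*ℓ*(x 0)); 0, 1, 0; 0, 0, 1] := by
    ext i j
    fin_cases i <;> fin_cases j <;> rfl
  rw [hinv, htr, hP]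
  ext i j
  fin_cases i <;> fin_cases j <;>
    simp [Matrix.mul_apply, Fin.sum_univ_three, Matrix.diagonal, Matrix.transpose_apply] <;> ring
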